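/- Let G = C_{n_1} ⊕ ⋯ ⊕ C_{n_r} with 1 < n_1 | ⋯ | n_r, let s ≥ 2 and t ∈ [1,r] satisfy s(s−1)/2 ≤ r − t + 1, and let k ≥ 2. Then D_k(G) ≥ D*(G) + s·⌊n_t/2⌋ + δ + (k−2)·n_r, where δ = 0 if n_t is even and δ = 1 if n_t is odd, and D*(G) = 1 + Σ_{i=1}^r (n_i − 1). -/

import Mathlib

open Multiset

/-- A nonempty zero-sum sequence (multiset) over `G`. -/
def IsZeroSumSeq {G : Type*} [AddCommGroup G] (S : Multiset G) : Prop :=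
  S ≠ 0 ∧ S.sum = 0

/-- A minimal zero-sum sequence: nonempty, zero-sum, and with no proper
nonempty zero-sum subsequence. -/
def IsMinZeroSum {G : Type*} [AddCommGroup G] (S : Multiset G) : Prop :=
  S ≠ 0 ∧ S.sum = 0 ∧ ∀ T : Multiset G, T ≤ S → T ≠ 0 → T.sum = 0 → T = S

/-- `ζ` is a factorization of `B` into minimal zero-sum sequences. -/
def IsFactorization {G : Type*} [AddCommGroup G] (ζ : Multiset (Multiset G))
    (B : Multiset G) : Prop :=
  ζ.sum = B ∧ ∀ A ∈ ζ, IsMinZeroSum A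

/-- The set of lengths `L(B)` of factorizations of `B` into minimal zero-sum
sequences. -/
def lengthSet {G : Type*} [AddCommGroup G] (B : Multiset G) : Set ℕ :=
  { n | ∃ ζ : Multiset (Multiset G), IsFactorization ζ B ∧ Multiset.card ζ = n }

/-- `max L(B)`, the maximal length of a factorization of `B` into minimal
zero-sum sequences. -/
noncomputable def maxL {G : Type*} [AddCommGroup G] (B : Multiset G) : ℕ :=
  sSup (lengthSet B)

/-- `S` contains `k` disjoint nonempty zero-sum subsequences. -/
def HasKDisjointZeroSum {G : Type*} [AddCommGroup G] (k : ℕ) (S : Multiset G) : Prop :=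
  ∃ T : Multiset (Multiset G), Multiset.card T = k ∧
    (∀ A ∈ T, IsZeroSumSeq A) ∧ T.sum ≤ S

/-- The `k`-wise Davenport constant: the smallest `ℓ` such that every sequence
over `G` of length at least `ℓ` has `k` disjoint nonempty zero-sum
subsequences. -/
noncomputable def Dk (G : Type*) [AddCommGroup G] (k : ℕ) : ℕ :=
  sInf { ℓ : ℕ | ∀ S : Multiset G, ℓ ≤ Multiset.card S → HasKDisjointZeroSum k S }

/-- `s_{≤ k}(G)` as an extended natural number: the smallest `m` such that every
sequence over `G` of length at least `m` has a nonempty zero-sum subsequence of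
length at most `k`. -/
noncomputable def sLE (G : Type*) [AddCommGroup G] (k : ℕ) : ℕ∞ :=
  sInf { m : ℕ∞ | ∀ S : Multiset G, m ≤ (Multiset.card S : ℕ∞) →
    ∃ T ≤ S, T ≠ 0 ∧ T.sum = 0 ∧ Multiset.card T ≤ k }

/-- `s_{≤ k}(G)` as a natural number (used when it is known to be finite). -/
noncomputable def sleN (G : Type*) [AddCommGroup G] (k : ℕ) : ℕ :=
  sInf { m : ℕ | ∀ S : Multiset G, m ≤ Multiset.card S →
    ∃ T ≤ S, T ≠ 0 ∧ T.sum = 0 ∧ Multiset.card T ≤ k }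

/-- `η(G) = s_{≤ exp(G)}(G)`. -/
noncomputable def etaC (G : Type*) [AddCommGroup G] : ℕ :=
  sleN G (AddMonoid.exponent G)


section AuxiliaryForStatement9

lemma exists_zerosum_aux {G : Type*} [AddCommGroup G] (L : List G) {i j : ℕ}
    (hij : i < j) (hjL : j ≤ L.length)
    (he : (L.take i).sum = (L.take j).sum) :
    ∃ T ≤ (L : Multiset G), T ≠ 0 ∧ T.sum = 0 ∧ Multiset.card T ≤ j - i := by
  classical
  set l : List G := (L.take j).drop i with hl
  have hsub : l.Sublist L := ((L.take j).drop_sublist i).trans (L.take_sublist j)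
  have hlen : l.length = j - i := by
    simp [hl, List.length_drop, List.length_take]
    omega
  have happ : L.take i ++ l = L.take j := by
    have h1 : (L.take j).take i = L.take i := by
      rw [List.take_take, min_eq_left hij.le]
    conv_rhs => rw [← List.take_append_drop i (L.take j)]
    rw [h1]
  have hsum : (L.take i).sum + l.sum = (L.take j).sum := by
    rw [← List.sum_append, happ]
  refine ⟨(l : Multiset G), ?_, ?_, ?_, ?_⟩
  · exact (Multiset.coe_le).2 hsub.subperm
  · simp only [ne_eq, Multiset.coe_eq_zero]
    intro h0
    have := hlen
    rw [h0] at this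
    simp at this
    omega
  · have : l.sum = 0 := by
      have := hsum
      rw [he] at this
      exact by
        have h2 : (L.take j).sum + l.sum = (L.take j).sum + 0 := by
          rw [add_zero]; exact this
        exact add_left_cancel h2
    simpa using this
  · simp [hlen]

lemma exists_zerosum {G : Type*} [AddCommGroup G] [Fintype G] (S : Multiset G)
    (h : Fintype.card G ≤ Multiset.card S) :
    ∃ T ≤ S, T ≠ 0 ∧ T.sum = 0 ∧ Multiset.card T ≤ Fintype.card G := by
  classical
  set N := Fintype.card G with hN
  set L := S.toList with hL
  have hlen : L.length = Multiset.card S := Multiset.length_toList S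
  obtain ⟨i, j, hij, he⟩ := Fintype.exists_ne_map_eq_of_card_lt
      (fun j : Fin (N + 1) => (L.take (j : ℕ)).sum) (by simp; omega)
  have hcoe : (L : Multiset G) = S := Multiset.coe_toList S
  have key : ∀ (a b : Fin (N+1)), (a:ℕ) < (b:ℕ) →
      (L.take (a:ℕ)).sum = (L.take (b:ℕ)).sum →
      ∃ T ≤ S, T ≠ 0 ∧ T.sum = 0 ∧ Multiset.card T ≤ N := by
    intro a b hab heq
    have hbL : (b:ℕ) ≤ L.length := by
      have := b.isLt; omega
    obtain ⟨T, hT1, hT2, hT3, hT4⟩ := exists_zerosum_aux L hab hbL heq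
    exact ⟨T, by rwa [hcoe] at hT1, hT2, hT3, by omega⟩
  rcases lt_or_gt_of_ne (fun hv => hij (hv)) with hlt | hlt
  · exact key i j (by exact_mod_cast hlt) he
  · exact key j i (by exact_mod_cast hlt) he.symm

lemma hasK_of_card {G : Type*} [AddCommGroup G] [Fintype G] :
    ∀ (k : ℕ) (S : Multiset G), k * Fintype.card G ≤ Multiset.card S →
      HasKDisjointZeroSum k S := by
  classical
  intro k
  induction k with
  | zero => intro S _; exact ⟨0, by simp, by simp, by simp⟩
  | succ k ih =>
    intro S hS
    have hpos : 0 < Fintype.card G := Fintype.card_pos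
    have h1 : Fintype.card G ≤ Multiset.card S := by nlinarith
    obtain ⟨T, hTS, hT0, hTsum, hTcard⟩ := exists_zerosum S h1
    have hsub : k * Fintype.card G ≤ Multiset.card (S - T) := by
      rw [Multiset.card_sub hTS]
      have h2 := Multiset.card_le_card hTS
      have h3 : (k+1) * Fintype.card G = k * Fintype.card G + Fintype.card G := by ring
      omega
    obtain ⟨U, hU1, hU2, hU3⟩ := ih (S - T) hsub
    refine ⟨T ::ₘ U, by simp [hU1], ?_, ?_⟩
    · intro A hA
      rcases Multiset.mem_cons.1 hA with h | h
      · exact h ▸ ⟨hT0, hTsum⟩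
      · exact hU2 A h
    · rw [Multiset.sum_cons]
      calc T + U.sum ≤ T + (S - T) := add_le_add (le_refl T) hU3
        _ = S := by
          rw [add_comm]
          exact tsub_add_cancel_of_le hTS


lemma map_msum {α β : Type*} (f : α → β) (T : Multiset (Multiset α)) :
    (T.map (Multiset.map f)).sum = Multiset.map f T.sum := by
  induction T using Multiset.induction_on with
  | empty => simp
  | cons a T ih => simp [ih]

section helpers

lemma card_fsum {ι β : Type*} (F : Finset ι) (M : ι → Multiset β) :
    Multiset.card (∑ z ∈ F, M z) = ∑ z ∈ F, Multiset.card (M z) := by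
  classical
  induction F using Finset.induction_on with
  | empty => simp
  | insert a F h ih => rw [Finset.sum_insert h, Finset.sum_insert h, Multiset.card_add, ih]

lemma sum_fsum {ι β : Type*} [AddCommMonoid β] (F : Finset ι) (M : ι → Multiset β) :
    (∑ z ∈ F, M z).sum = ∑ z ∈ F, (M z).sum := by
  classical
  induction F using Finset.induction_on with
  | empty => simp
  | insert a F h ih => rw [Finset.sum_insert h, Finset.sum_insert h, Multiset.sum_add, ih]

end helpers

lemma split_le {α : Type*} [DecidableEq α] {A X Y : Multiset α} (h : A ≤ X + Y) :
    ∃ B C, B ≤ X ∧ C ≤ Y ∧ A = B + C := by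
  refine ⟨A ∩ X, A - X, Multiset.inter_le_right, ?_, ?_⟩
  · rw [Multiset.sub_le_iff_le_add]
    rwa [add_comm] at h
  · ext a
    rw [Multiset.count_add, Multiset.count_inter, Multiset.count_sub]
    have := Multiset.count_le_of_le a h
    rw [Multiset.count_add] at this
    omega

lemma le_repl {α : Type*} {A : Multiset α} {x : α} {n : ℕ} (h : A ≤ replicate n x) :
    A = replicate (Multiset.card A) x ∧ Multiset.card A ≤ n := by
  constructor
  · rw [Multiset.eq_replicate_card]
    intro b hb
    exact Multiset.eq_of_mem_replicate (Multiset.subset_of_le h hb)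
  · have := Multiset.card_le_card h
    simpa using this

lemma decomp_single {ι α : Type*} [DecidableEq ι] [DecidableEq α] (v : ι → α) :
    ∀ (F : Finset ι) (μ : ι → ℕ) (A : Multiset α),
      A ≤ ∑ z ∈ F, replicate (μ z) (v z) →
      ∃ c : ι → ℕ, (∀ z, c z ≤ μ z) ∧ A = ∑ z ∈ F, replicate (c z) (v z) := by
  intro F
  induction F using Finset.induction_on with
  | empty =>
    intro μ A hA
    simp only [Finset.sum_empty, Multiset.le_zero] at hA
    exact ⟨fun _ => 0, fun _ => Nat.zero_le _, by simp [hA]⟩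
  | insert a F ha ih =>
    intro μ A hA
    rw [Finset.sum_insert ha] at hA
    obtain ⟨B, C, hB, hC, hBC⟩ := split_le hA
    obtain ⟨hBr, hBn⟩ := le_repl hB
    obtain ⟨c', hc'1, hc'2⟩ := ih μ C hC
    classical
    refine ⟨fun z => if z = a then min (Multiset.card B) (μ a) else c' z, ?_, ?_⟩
    · intro z
      by_cases hz : z = a
      · simp [hz]
      · simp [hz, hc'1 z]
    · beta_reduce
      rw [Finset.sum_insert ha, if_pos rfl, min_eq_left hBn, hBC, ← hBr, hc'2]
      congr 1
      exact Finset.sum_congr rfl fun z hz => by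
        rw [if_neg (by rintro rfl; exact ha hz)]

lemma decomp_multi {ι α : Type*} [DecidableEq ι] [DecidableEq α] [Fintype ι] (v : ι → α) :
    ∀ (L : List (Multiset α)) (μ : ι → ℕ),
      L.sum ≤ ∑ z : ι, replicate (μ z) (v z) →
      ∃ c : List (ι → ℕ), c.length = L.length ∧
        (∀ z, ((c.map (fun w => w z)).sum ≤ μ z)) ∧
        List.Forall₂ (fun A w => A = ∑ z : ι, replicate (w z) (v z)) L c := by
  intro L
  induction L with
  | nil => intro μ _; exact ⟨[], rfl, by simp, List.Forall₂.nil⟩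
  | cons A L ih =>
    intro μ h
    have hA : A ≤ ∑ z : ι, replicate (μ z) (v z) := by
      refine le_trans ?_ h
      rw [List.sum_cons]
      exact Multiset.le_add_right A L.sum
    obtain ⟨c₀, hc₀, hAc₀⟩ := decomp_single v Finset.univ μ A hA
    have hsplit : (∑ z : ι, replicate (μ z) (v z)) =
        (∑ z : ι, replicate (c₀ z) (v z)) + ∑ z : ι, replicate (μ z - c₀ z) (v z) := by
      rw [← Finset.sum_add_distrib]
      refine Finset.sum_congr rfl fun z _ => ?_
      rw [← Multiset.replicate_add]
      congr 1
      have := hc₀ z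
      omega
    have hL : L.sum ≤ ∑ z : ι, replicate (μ z - c₀ z) (v z) := by
      have h2 : A + L.sum ≤ A + ∑ z : ι, replicate (μ z - c₀ z) (v z) := by
        rw [List.sum_cons] at h
        rw [hsplit, ← hAc₀] at h
        exact h
      exact le_of_add_le_add_left h2
    obtain ⟨c', hlen, hcol, hrel⟩ := ih (fun z => μ z - c₀ z) hL
    refine ⟨c₀ :: c', by simp [hlen], ?_, List.Forall₂.cons hAc₀ hrel⟩
    intro z
    simp only [List.map_cons, List.sum_cons]
    have h1 : (List.map (fun w => w z) c').sum ≤ μ z - c₀ z := hcol z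
    have h2 := hc₀ z
    generalize hq : (List.map (fun w => w z) c').sum = q at h1 ⊢
    clear hq hcol hrel ih h hA hAc₀ hsplit hL
    omega


def pidx (a b : ℕ) : ℕ := Nat.choose (max a b) 2 + min a b

lemma pidx_symm (a b : ℕ) : pidx a b = pidx b a := by
  unfold pidx; rw [max_comm, min_comm]

lemma choose_two_succ (h : ℕ) : (h+1).choose 2 = h.choose 2 + h := by
  rw [Nat.choose_succ_succ]
  simp [Nat.choose_one_right, Nat.add_comm]

lemma pidx_lt {a b s : ℕ} (hab : a ≠ b) (ha : a < s) (hb : b < s) :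
    pidx a b < s.choose 2 := by
  unfold pidx
  set lo := min a b
  set hi := max a b
  have h1 : lo < hi := by unfold lo hi; omega
  have h2 : hi < s := by unfold hi; omega
  calc hi.choose 2 + lo < hi.choose 2 + hi := by omega
    _ = (hi+1).choose 2 := (choose_two_succ hi).symm
    _ ≤ s.choose 2 := Nat.choose_le_choose 2 (by omega)

lemma pidx_inj {a b a' b' : ℕ} (h : a ≠ b) (h' : a' ≠ b')
    (he : pidx a b = pidx a' b') : min a b = min a' b' ∧ max a b = max a' b' := by
  unfold pidx at he
  set lo := min a b
  set hi := max a b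
  set lo' := min a' b'
  set hi' := max a' b'
  have h1 : lo < hi := by unfold lo hi; omega
  have h1' : lo' < hi' := by unfold lo' hi'; omega
  have key : ∀ x y x' y' : ℕ, x < y → x' < y' →
      y.choose 2 + x = y'.choose 2 + x' → y ≤ y' → y = y' := by
    intro x y x' y' hxy hxy' heq hle
    by_contra hne
    have hlt : y < y' := by omega
    have : y.choose 2 + x < y'.choose 2 := by
      calc y.choose 2 + x < y.choose 2 + y := by omega
        _ = (y+1).choose 2 := (choose_two_succ y).symm
        _ ≤ y'.choose 2 := Nat.choose_le_choose 2 (by omega)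
    omega
  have hy : hi = hi' := by
    rcases le_total hi hi' with hle | hle
    · exact key lo hi lo' hi' h1 h1' he hle
    · exact (key lo' hi' lo hi h1' h1 he.symm hle).symm
  constructor
  · rw [hy] at he
    omega
  · exact hy

lemma construction (r : ℕ) (n : Fin (r + 1) → ℕ) (h1 : ∀ i, 1 < n i)
    (hdvd : ∀ i j : Fin (r + 1), i ≤ j → n i ∣ n j)
    (s : ℕ) (hs : 2 ≤ s) (t : Fin (r + 1))
    (hst : s * (s - 1) / 2 ≤ r - (t : ℕ) + 1)
    (k : ℕ) (hk : 2 ≤ k) :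
    ∃ S₀ : Multiset (∀ i : Fin (r+1), ZMod (n i)),
      Multiset.card S₀ + 1 =
        (1 + ∑ i, (n i - 1)) + s * (n t / 2) + (if Even (n t) then 0 else 1) +
        (k - 2) * n (Fin.last r) ∧
      ¬ HasKDisjointZeroSum k S₀ := by
  classical
  haveI : ∀ d : Fin (r+1), NeZero (n d) := fun d => ⟨by have := h1 d; omega⟩
  have ht : (t : ℕ) ≤ r := by have := t.isLt; omega
  have hchoose : s.choose 2 ≤ r - (t:ℕ) + 1 := by rw [Nat.choose_two_right]; exact hst
  -- the pair coordinates
  set D : Fin s → Fin s → Fin (r+1) :=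
    fun i j => ⟨min ((t:ℕ) + pidx i j) r, by
      have := min_le_right ((t:ℕ) + pidx i j) r; omega⟩ with hD
  have hD_eq : ∀ i j : Fin s, i ≠ j → ((D i j : Fin (r+1)) : ℕ) = (t:ℕ) + pidx i j := by
    intro i j hij
    have hij' : (i:ℕ) ≠ (j:ℕ) := fun h => hij (Fin.ext h)
    have h2 : pidx i j < s.choose 2 := pidx_lt hij' i.isLt j.isLt
    have h3 : (t:ℕ) + pidx i j ≤ r := by omega
    simp [hD, min_eq_left h3]
  have hD_ge : ∀ i j : Fin s, i ≠ j → (t:ℕ) ≤ ((D i j : Fin (r+1)) : ℕ) := by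
    intro i j hij; rw [hD_eq i j hij]; omega
  have hD_symm : ∀ i j : Fin s, D i j = D j i := by
    intro i j; apply Fin.ext; simp [hD, pidx_symm]
  have hD_inj : ∀ i j u v : Fin s, i ≠ j → u ≠ v → D i j = D u v →
      (i = u ∧ j = v) ∨ (i = v ∧ j = u) := by
    intro i j u v hij huv he
    have hij' : (i:ℕ) ≠ (j:ℕ) := fun h => hij (Fin.ext h)
    have huv' : (u:ℕ) ≠ (v:ℕ) := fun h => huv (Fin.ext h)
    have hval : ((D i j : Fin (r+1)) : ℕ) = ((D u v : Fin (r+1)) : ℕ) := by rw [he]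
    rw [hD_eq i j hij, hD_eq u v huv] at hval
    have hp : pidx i j = pidx u v := by omega
    obtain ⟨hmin, hmax⟩ := pidx_inj hij' huv' hp
    have : ((i:ℕ) = u ∧ (j:ℕ) = v) ∨ ((i:ℕ) = v ∧ (j:ℕ) = u) := by omega
    rcases this with ⟨ha, hb⟩ | ⟨ha, hb⟩
    · exact Or.inl ⟨Fin.ext ha, Fin.ext hb⟩
    · exact Or.inr ⟨Fin.ext ha, Fin.ext hb⟩
  -- basis elements and pair elements
  set e : Fin (r+1) → (∀ i : Fin (r+1), ZMod (n i)) :=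
    fun c => Pi.single c (1 : ZMod (n c)) with he
  set g : Fin s → (∀ i : Fin (r+1), ZMod (n i)) :=
    fun i => ∑ w ∈ Finset.univ.erase i, e (D i w) with hg
  set cnt : Fin s → Fin (r+1) → ℕ :=
    fun i d => (((Finset.univ.erase i)).filter (fun w => D i w = d)).card with hcnt
  have he_apply : ∀ c d : Fin (r+1), e c d = if c = d then 1 else 0 := by
    intro c d
    by_cases hcd : c = d
    · subst hcd; simp [he]
    · simp [he, hcd, Pi.single_eq_of_ne (Ne.symm hcd)]
  have hg_apply : ∀ (i : Fin s) (d : Fin (r+1)), g i d = ((cnt i d : ℕ) : ZMod (n d)) := by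
    intro i d
    rw [hg]
    simp only
    rw [Finset.sum_apply]
    rw [hcnt]
    simp only
    rw [← Finset.sum_boole]
    exact Finset.sum_congr rfl fun w _ => he_apply (D i w) d
  have hcnt_pair : ∀ u v : Fin s, u ≠ v → ∀ i : Fin s,
      cnt i (D u v) = (if i = u then 1 else 0) + (if i = v then 1 else 0) := by
    intro u v huv i
    rw [hcnt]
    simp only
    by_cases hiu : i = u
    · subst hiu
      rw [if_pos rfl, if_neg huv]
      have : (Finset.univ.erase i).filter (fun w => D i w = D i v) = {v} := by
        ext w
        simp only [Finset.mem_filter, Finset.mem_erase, Finset.mem_univ, true_and, and_true,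
          Finset.mem_singleton]
        constructor
        · rintro ⟨hwi, hDw⟩
          rcases hD_inj i w i v (Ne.symm hwi) huv hDw with ⟨-, hb⟩ | ⟨ha, -⟩
          · exact hb
          · exact absurd ha huv
        · rintro rfl; exact ⟨Ne.symm huv, rfl⟩
      rw [this]; simp
    · by_cases hiv : i = v
      · subst hiv
        rw [if_neg hiu, if_pos rfl]
        have : (Finset.univ.erase i).filter (fun w => D i w = D u i) = {u} := by
          ext w
          simp only [Finset.mem_filter, Finset.mem_erase, Finset.mem_univ, true_and, and_true,
            Finset.mem_singleton]
          constructor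
          · rintro ⟨hwi, hDw⟩
            rcases hD_inj i w u i (Ne.symm hwi) huv hDw with ⟨ha, -⟩ | ⟨-, hb⟩
            · exact absurd ha hiu
            · exact hb
          · rintro rfl; exact ⟨fun h => hiu h.symm, hD_symm _ _⟩
        rw [this]; simp
      · rw [if_neg hiu, if_neg hiv]
        have : (Finset.univ.erase i).filter (fun w => D i w = D u v) = ∅ := by
          ext w
          simp only [Finset.mem_filter, Finset.mem_erase, Finset.mem_univ, true_and, and_true,
            Finset.notMem_empty, iff_false, not_and]
          intro hwi hDw
          rcases hD_inj i w u v (Ne.symm hwi) huv hDw with ⟨ha, -⟩ | ⟨ha, -⟩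
          · exact hiu ha
          · exact hiv ha
        rw [this]; simp
  -- multiplicities
  set i0 : Fin s := ⟨0, by omega⟩ with hi0
  set dlt : ℕ := if Even (n t) then 0 else 1 with hdlt
  set m : Fin s → ℕ := fun i => n t / 2 + (if i = i0 then dlt else 0) with hm
  set N : Fin (r+1) → ℕ :=
    fun c => (n c - 1) + (if c = Fin.last r then (k-2) * n c else 0) with hN
  set v : (Fin (r+1)) ⊕ (Fin s) → (∀ i : Fin (r+1), ZMod (n i)) := Sum.elim e g with hv
  set μ : (Fin (r+1)) ⊕ (Fin s) → ℕ := Sum.elim N m with hμ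
  set S₀ : Multiset (∀ i : Fin (r+1), ZMod (n i)) :=
    ∑ z : (Fin (r+1)) ⊕ (Fin s), Multiset.replicate (μ z) (v z) with hS₀
  have hmm : ∀ u v : Fin s, u ≠ v → m u + m v ≤ n t := by
    intro u v huv
    have h2 := Nat.div_add_mod (n t) 2
    have hd2 : dlt ≤ n t % 2 := by
      rw [hdlt]
      by_cases hpar : Even (n t)
      · simp [hpar]
      · rw [if_neg hpar]
        have := Nat.odd_iff.mp (Nat.not_even_iff_odd.mp hpar)
        omega
    have hmu : m u = n t / 2 + (if u = i0 then dlt else 0) := by rw [hm]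
    have hmv : m v = n t / 2 + (if v = i0 then dlt else 0) := by rw [hm]
    rw [hmu, hmv]
    by_cases hu : u = i0
    · rw [if_pos hu, if_neg (by rintro rfl; exact huv hu)]; omega
    · rw [if_neg hu]
      by_cases hv' : v = i0
      · rw [if_pos hv']; omega
      · rw [if_neg hv']; omega
  have hnt_le : ∀ d : Fin (r+1), (t:ℕ) ≤ (d:ℕ) → n t ≤ n d := by
    intro d hd
    exact Nat.le_of_dvd (by have := h1 d; omega) (hdvd t d hd)
  have hcard : Multiset.card S₀ + 1 =
      (1 + ∑ i, (n i - 1)) + s * (n t / 2) + (if Even (n t) then 0 else 1) +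
        (k - 2) * n (Fin.last r) := by
    rw [hS₀, card_fsum]
    rw [Fintype.sum_sum_type]
    simp only [Multiset.card_replicate]
    have hA : ∑ c : Fin (r+1), μ (Sum.inl c) = (∑ c, (n c - 1)) + (k-2) * n (Fin.last r) := by
      rw [hμ]
      simp only [Sum.elim_inl, hN]
      rw [Finset.sum_add_distrib]
      congr 1
      rw [Finset.sum_ite_eq' Finset.univ (Fin.last r) (fun c => (k-2) * n c)]
      simp
    have hB : ∑ i : Fin s, μ (Sum.inr i) = s * (n t / 2) + dlt := by
      rw [hμ]
      simp only [Sum.elim_inr, hm]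
      rw [Finset.sum_add_distrib]
      congr 1
      · simp [Finset.sum_const, mul_comm]
      · rw [Finset.sum_ite_eq' Finset.univ i0 (fun _ => dlt)]
        simp
    rw [hA, hB, hdlt]
    ring
  refine ⟨S₀, hcard, ?_⟩
  intro hK
  obtain ⟨T, hTcard, hTzs, hTle⟩ := hK
  set L := T.toList with hLdef
  have hLlen : L.length = k := by rw [hLdef, Multiset.length_toList, hTcard]
  have hLsum : L.sum = T.sum := Multiset.sum_toList T
  obtain ⟨cL, hclen, hcolL, hrel⟩ := decomp_multi v L μ (by rw [hLsum, ← hS₀]; exact hTle)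
  have hkk : cL.length = k := by rw [hclen, hLlen]
  set c : Fin k → (Fin (r+1)) ⊕ (Fin s) → ℕ := fun l => cL.get (Fin.cast hkk.symm l) with hc
  have hceq : cL = List.ofFn c := by
    apply List.ext_get
    · simp [hkk]
    · intro i2 hi1 hi2
      rw [List.get_ofFn]
      exact congrArg cL.get (Fin.ext rfl)
  have hcol : ∀ z, ∑ l : Fin k, c l z ≤ μ z := by
    intro z
    have h := hcolL z
    rw [hceq, List.map_ofFn, List.sum_ofFn] at h
    exact h
  obtain ⟨-, hget⟩ := List.forall₂_iff_get.mp hrel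
  have hA : ∀ l : Fin k, L.get ⟨(l:ℕ), by omega⟩
      = ∑ z : (Fin (r+1)) ⊕ (Fin s), Multiset.replicate (c l z) (v z) := by
    intro l
    exact hget (l:ℕ) (by omega) (by omega)
  have hmem : ∀ l : Fin k, (L.get ⟨(l:ℕ), by omega⟩) ∈ T := by
    intro l
    rw [← Multiset.mem_toList]
    exact List.get_mem L _
  have hzs : ∀ l : Fin k,
      (∑ z : (Fin (r+1)) ⊕ (Fin s), Multiset.replicate (c l z) (v z)).sum = 0 ∧
      (∑ z : (Fin (r+1)) ⊕ (Fin s), Multiset.replicate (c l z) (v z)) ≠ 0 := by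
    intro l
    have h := hTzs _ (hmem l)
    rw [hA l] at h
    exact ⟨h.2, h.1⟩
  have hNE : ∀ l : Fin k, ∃ z, 0 < c l z := by
    intro l
    by_contra h
    push_neg at h
    have hz : ∀ z, c l z = 0 := fun z => by have := h z; omega
    apply (hzs l).2
    have : ∀ z ∈ (Finset.univ : Finset ((Fin (r+1)) ⊕ (Fin s))),
        Multiset.replicate (c l z) (v z) = 0 := by
      intro z _; rw [hz z]; rfl
    rw [Finset.sum_congr rfl this]
    simp
  have hKEY : ∀ (l : Fin k) (d : Fin (r+1)),
      n d ∣ c l (Sum.inl d) + ∑ i, c l (Sum.inr i) * cnt i d := by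
    intro l d
    have hsum0 := (hzs l).1
    rw [sum_fsum] at hsum0
    simp only [Multiset.sum_replicate] at hsum0
    have h0 : (∑ z : (Fin (r+1)) ⊕ (Fin s), c l z • v z) d = 0 := by rw [hsum0]; rfl
    rw [Finset.sum_apply] at h0
    simp only [Pi.smul_apply] at h0
    rw [Fintype.sum_sum_type] at h0
    have hA1 : ∑ cc : Fin (r+1), c l (Sum.inl cc) • (v (Sum.inl cc) d)
        = ((c l (Sum.inl d) : ℕ) : ZMod (n d)) := by
      have hterm : ∀ cc, c l (Sum.inl cc) • (v (Sum.inl cc) d)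
          = if cc = d then ((c l (Sum.inl cc) : ℕ) : ZMod (n d)) else 0 := by
        intro cc
        rw [hv]
        simp only [Sum.elim_inl]
        rw [he_apply]
        by_cases hcd : cc = d
        · rw [if_pos hcd, if_pos hcd, nsmul_eq_mul, mul_one]
        · rw [if_neg hcd, if_neg hcd, smul_zero]
      rw [Finset.sum_congr rfl (fun cc _ => hterm cc)]
      rw [Finset.sum_ite_eq' Finset.univ d (fun cc => ((c l (Sum.inl cc) : ℕ) : ZMod (n d)))]
      simp
    have hA2 : ∑ i : Fin s, c l (Sum.inr i) • (v (Sum.inr i) d)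
        = ((∑ i, c l (Sum.inr i) * cnt i d : ℕ) : ZMod (n d)) := by
      rw [Nat.cast_sum]
      refine Finset.sum_congr rfl fun i _ => ?_
      rw [hv]
      simp only [Sum.elim_inr]
      rw [hg_apply, nsmul_eq_mul, Nat.cast_mul]
    rw [hA1, hA2, ← Nat.cast_add] at h0
    exact (ZMod.natCast_eq_zero_iff _ _).mp h0
  have two_le_sum : ∀ (f : Fin k → ℕ) (l l' : Fin k), l ≠ l' →
      f l + f l' ≤ ∑ l'', f l'' := by
    intro f l l' hll
    rw [← Finset.sum_pair hll]
    exact Finset.sum_le_sum_of_subset (Finset.subset_univ _)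
  have one_le_sum : ∀ (f : Fin k → ℕ) (l : Fin k), f l ≤ ∑ l'', f l'' := by
    intro f l
    exact Finset.single_le_sum (fun _ _ => Nat.zero_le _) (Finset.mem_univ l)
  have hKEYpair : ∀ (l : Fin k) (u w : Fin s), u ≠ w →
      n (D u w) ∣ c l (Sum.inl (D u w)) + (c l (Sum.inr u) + c l (Sum.inr w)) := by
    intro l u w huw
    have h := hKEY l (D u w)
    have hx : ∑ i, c l (Sum.inr i) * cnt i (D u w)
        = c l (Sum.inr u) + c l (Sum.inr w) := by
      have hterm : ∀ i : Fin s, c l (Sum.inr i) * cnt i (D u w)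
          = (if i = u then c l (Sum.inr i) else 0) + (if i = w then c l (Sum.inr i) else 0) := by
        intro i
        rw [hcnt_pair u w huw i]
        by_cases hiu : i = u
        · rw [if_pos hiu, if_pos hiu, if_neg (by rw [hiu]; exact huw), if_neg (by rw [hiu]; exact huw)]
          ring
        · rw [if_neg hiu, if_neg hiu]
          by_cases hiw : i = w
          · rw [if_pos hiw, if_pos hiw]; ring
          · rw [if_neg hiw, if_neg hiw]; ring
      rw [Finset.sum_congr rfl (fun i _ => hterm i), Finset.sum_add_distrib,
        Finset.sum_ite_eq' Finset.univ u (fun i => c l (Sum.inr i)),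
        Finset.sum_ite_eq' Finset.univ w (fun i => c l (Sum.inr i))]
      simp
    rwa [hx] at h
  have hL1 : ∀ (u w : Fin s), u ≠ w → D u w ≠ Fin.last r → ∀ (l l' : Fin k), l ≠ l' →
      c l (Sum.inr u) + c l (Sum.inr w) = 0 ∨ c l' (Sum.inr u) + c l' (Sum.inr w) = 0 := by
    intro u w huw hdne l l' hll
    by_contra hcon
    push_neg at hcon
    obtain ⟨hp1, hp2⟩ := hcon
    have hge1 : n (D u w) ≤ c l (Sum.inl (D u w)) + (c l (Sum.inr u) + c l (Sum.inr w)) :=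
      Nat.le_of_dvd (by omega) (hKEYpair l u w huw)
    have hge2 : n (D u w) ≤ c l' (Sum.inl (D u w)) + (c l' (Sum.inr u) + c l' (Sum.inr w)) :=
      Nat.le_of_dvd (by omega) (hKEYpair l' u w huw)
    have hsa : c l (Sum.inl (D u w)) + c l' (Sum.inl (D u w)) ≤ N (D u w) :=
      le_trans (two_le_sum (fun l'' => c l'' (Sum.inl (D u w))) l l' hll) (hcol (Sum.inl (D u w)))
    have hsu : c l (Sum.inr u) + c l' (Sum.inr u) ≤ m u :=
      le_trans (two_le_sum (fun l'' => c l'' (Sum.inr u)) l l' hll) (hcol (Sum.inr u))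
    have hsw : c l (Sum.inr w) + c l' (Sum.inr w) ≤ m w :=
      le_trans (two_le_sum (fun l'' => c l'' (Sum.inr w)) l l' hll) (hcol (Sum.inr w))
    have hNd : N (D u w) = n (D u w) - 1 := by rw [hN]; simp [hdne]
    have hmt : m u + m w ≤ n t := hmm u w huw
    have hnt : n t ≤ n (D u w) := hnt_le _ (hD_ge u w huw)
    have hpos := h1 (D u w)
    omega
  have hpure : ∀ l : Fin k, (∀ i, c l (Sum.inr i) = 0) →
      n (Fin.last r) ≤ c l (Sum.inl (Fin.last r)) := by
    intro l hx
    have hdall : ∀ d, n d ∣ c l (Sum.inl d) := by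
      intro d
      have h := hKEY l d
      have : ∑ i, c l (Sum.inr i) * cnt i d = 0 := by
        refine Finset.sum_eq_zero fun i _ => ?_
        rw [hx i, zero_mul]
      rwa [this, add_zero] at h
    have hzero : ∀ d, d ≠ Fin.last r → c l (Sum.inl d) = 0 := by
      intro d hd
      have hb : c l (Sum.inl d) ≤ N d := le_trans (one_le_sum (fun l'' => c l'' (Sum.inl d)) l) (hcol (Sum.inl d))
      have hNd : N d = n d - 1 := by rw [hN]; simp [hd]
      by_contra hne0
      have := Nat.le_of_dvd (by omega) (hdall d)
      have := h1 d
      omega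
    obtain ⟨z, hz⟩ := hNE l
    have hposlast : 0 < c l (Sum.inl (Fin.last r)) := by
      rcases z with d | i
      · by_cases hd : d = Fin.last r
        · rw [← hd]; exact hz
        · rw [hzero d hd] at hz; omega
      · rw [hx i] at hz; omega
    exact Nat.le_of_dvd hposlast (hdall (Fin.last r))
  have hNlast : N (Fin.last r) = (n (Fin.last r) - 1) + (k-2) * n (Fin.last r) := by
    rw [hN]; simp
  have hfin : ∀ (F : Finset (Fin k)), k - 1 ≤ F.card →
      (∀ l ∈ F, n (Fin.last r) ≤ c l (Sum.inl (Fin.last r))) → False := by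
    intro F hFcard hFge
    have hsum1 : F.card * n (Fin.last r) ≤ ∑ l ∈ F, c l (Sum.inl (Fin.last r)) := by
      have := Finset.card_nsmul_le_sum F (fun l => c l (Sum.inl (Fin.last r)))
        (n (Fin.last r)) hFge
      simpa [smul_eq_mul] using this
    have hsum2 : ∑ l ∈ F, c l (Sum.inl (Fin.last r)) ≤ N (Fin.last r) :=
      le_trans (Finset.sum_le_sum_of_subset (Finset.subset_univ F)) (hcol _)
    have hmul : (k - 1) * n (Fin.last r) ≤ F.card * n (Fin.last r) :=
      Nat.mul_le_mul_right _ hFcard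
    have hexp : (k - 1) * n (Fin.last r) = (k-2) * n (Fin.last r) + n (Fin.last r) := by
      rw [show k - 1 = (k-2) + 1 by omega, add_mul, one_mul]
    have := h1 (Fin.last r)
    omega
  by_cases hR : ∃ u w : Fin s, u ≠ w ∧ D u w = Fin.last r
  · -- some pair coordinate equals the last coordinate
    obtain ⟨u₀, v₀, huv0, hD0⟩ := hR
    have hKEY0 : ∀ l : Fin k, n (Fin.last r) ∣
        c l (Sum.inl (Fin.last r)) + (c l (Sum.inr u₀) + c l (Sum.inr v₀)) := by
      intro l
      have := hKEYpair l u₀ v₀ huv0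
      rwa [hD0] at this
    have hDne : ∀ p q : Fin s, p ≠ q → p ≠ u₀ → p ≠ v₀ → D p q ≠ Fin.last r := by
      intro p q hpq hpu hpv hEq
      rw [← hD0] at hEq
      rcases hD_inj p q u₀ v₀ hpq huv0 hEq with ⟨ha, -⟩ | ⟨ha, -⟩
      · exact hpu ha
      · exact hpv ha
    have hfind : ∀ l : Fin k,
        ¬ (0 < c l (Sum.inl (Fin.last r)) + (c l (Sum.inr u₀) + c l (Sum.inr v₀))) →
        ∃ i : Fin s, i ≠ u₀ ∧ i ≠ v₀ ∧ 0 < c l (Sum.inr i) := by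
      intro l hnt
      have h3 : c l (Sum.inl (Fin.last r)) = 0 ∧ c l (Sum.inr u₀) = 0 ∧
          c l (Sum.inr v₀) = 0 := by omega
      by_contra hno
      push_neg at hno
      have hx : ∀ i, c l (Sum.inr i) = 0 := by
        intro i
        by_cases hiu : i = u₀
        · rw [hiu]; exact h3.2.1
        · by_cases hiv : i = v₀
          · rw [hiv]; exact h3.2.2
          · have := hno i hiu hiv; omega
      have := hpure l hx
      have := h1 (Fin.last r)
      omega
    set touch : Fin k → Prop :=
      fun l => 0 < c l (Sum.inl (Fin.last r)) + (c l (Sum.inr u₀) + c l (Sum.inr v₀))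
      with htouch
    have hBle : ∀ l l' : Fin k, l ≠ l' → ¬ touch l → ¬ touch l' → False := by
      intro l l' hll hτ hτ'
      obtain ⟨i, hiu, hiv, hipos⟩ := hfind l hτ
      obtain ⟨j, hju, hjv, hjpos⟩ := hfind l' hτ'
      by_cases hij : i = j
      · subst hij
        obtain ⟨w, hw⟩ := Fintype.exists_ne_of_one_lt_card
          (by rw [Fintype.card_fin]; omega) i
        have hiw : i ≠ w := Ne.symm hw
        rcases hL1 i w hiw (hDne i w hiw hiu hiv) l l' hll with hzz | hzz <;> omega
      · rcases hL1 i j hij (hDne i j hij hiu hiv) l l' hll with hzz | hzz <;> omega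
    by_cases hBne : ∃ l₀ : Fin k, ¬ touch l₀
    · obtain ⟨l₀, hl₀⟩ := hBne
      have hall : ∀ l : Fin k, l ≠ l₀ → touch l := by
        intro l hl
        by_contra hcon
        exact hBle l l₀ hl hcon hl₀
      obtain ⟨i₀, hiu, hiv, hipos⟩ := hfind l₀ hl₀
      have hx0 : ∀ l : Fin k, l ≠ l₀ → c l (Sum.inr u₀) = 0 ∧ c l (Sum.inr v₀) = 0 := by
        intro l hl
        constructor
        · rcases hL1 i₀ u₀ hiu (hDne i₀ u₀ hiu hiu hiv) l₀ l (Ne.symm hl) with hzz | hzz <;> omega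
        · rcases hL1 i₀ v₀ hiv (hDne i₀ v₀ hiv hiu hiv) l₀ l (Ne.symm hl) with hzz | hzz <;> omega
      have hge : ∀ l ∈ Finset.univ.erase l₀, n (Fin.last r) ≤ c l (Sum.inl (Fin.last r)) := by
        intro l hl
        have hlne : l ≠ l₀ := (Finset.mem_erase.mp hl).1
        have hueq := (hx0 l hlne).1
        have hveq := (hx0 l hlne).2
        have hta : touch l := hall l hlne
        have := Nat.le_of_dvd (by rw [htouch] at hta; omega) (hKEY0 l)
        omega
      refine hfin (Finset.univ.erase l₀) ?_ hge
      rw [Finset.card_erase_of_mem (Finset.mem_univ l₀), Finset.card_univ, Fintype.card_fin]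
    · push_neg at hBne
      have htch : ∀ l : Fin k, n (Fin.last r) ≤
          c l (Sum.inl (Fin.last r)) + (c l (Sum.inr u₀) + c l (Sum.inr v₀)) := by
        intro l
        have hb := hBne l
        simp only [htouch] at hb
        exact Nat.le_of_dvd hb (hKEY0 l)
      have hsum1 : k * n (Fin.last r) ≤
          ∑ l : Fin k, (c l (Sum.inl (Fin.last r)) + (c l (Sum.inr u₀) + c l (Sum.inr v₀))) := by
        have := Finset.card_nsmul_le_sum Finset.univ
          (fun l : Fin k => c l (Sum.inl (Fin.last r)) + (c l (Sum.inr u₀) + c l (Sum.inr v₀)))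
          (n (Fin.last r))
          (fun l _ => htch l)
        simpa [smul_eq_mul] using this
      have hsum2 : ∑ l : Fin k, (c l (Sum.inl (Fin.last r)) + (c l (Sum.inr u₀) + c l (Sum.inr v₀)))
          ≤ N (Fin.last r) + (m u₀ + m v₀) := by
        rw [Finset.sum_add_distrib, Finset.sum_add_distrib]
        have b1 := hcol (Sum.inl (Fin.last r))
        have b2 := hcol (Sum.inr u₀)
        have b3 := hcol (Sum.inr v₀)
        rw [hμ] at b1 b2 b3
        simp only [Sum.elim_inl, Sum.elim_inr] at b1 b2 b3
        omega
      have hmt : m u₀ + m v₀ ≤ n t := hmm u₀ v₀ huv0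
      have hnt : n t ≤ n (Fin.last r) := hnt_le _ (by simp [Fin.val_last, ht])
      have h2n : 2 * n (Fin.last r) ≤ k * n (Fin.last r) := Nat.mul_le_mul_right _ hk
      have hexp : (k-2) * n (Fin.last r) = k * n (Fin.last r) - 2 * n (Fin.last r) :=
        Nat.sub_mul k 2 (n (Fin.last r))
      have := h1 (Fin.last r)
      rw [hNlast] at hsum2
      omega
  · push_neg at hR
    have huniq : ∀ l l' : Fin k, l ≠ l' →
        (∀ i, c l (Sum.inr i) = 0) ∨ (∀ i, c l' (Sum.inr i) = 0) := by
      intro l l' hll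
      by_contra hcon
      push_neg at hcon
      obtain ⟨⟨i, hi⟩, ⟨j, hj⟩⟩ := hcon
      by_cases hij : i = j
      · subst hij
        obtain ⟨w, hw⟩ := Fintype.exists_ne_of_one_lt_card
          (by rw [Fintype.card_fin]; omega) i
        have hiw : i ≠ w := Ne.symm hw
        rcases hL1 i w hiw (hR i w hiw) l l' hll with hzz | hzz <;> omega
      · rcases hL1 i j hij (hR i j hij) l l' hll with hzz | hzz <;> omega
    by_cases hBne : ∃ l₀ : Fin k, ¬ (∀ i, c l₀ (Sum.inr i) = 0)
    · obtain ⟨l₀, hl₀⟩ := hBne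
      have hge : ∀ l ∈ Finset.univ.erase l₀, n (Fin.last r) ≤ c l (Sum.inl (Fin.last r)) := by
        intro l hl
        have hlne : l ≠ l₀ := (Finset.mem_erase.mp hl).1
        rcases huniq l l₀ hlne with h | h
        · exact hpure l h
        · exact absurd h hl₀
      refine hfin (Finset.univ.erase l₀) ?_ hge
      rw [Finset.card_erase_of_mem (Finset.mem_univ l₀), Finset.card_univ, Fintype.card_fin]
    · push_neg at hBne
      have hge : ∀ l ∈ (Finset.univ : Finset (Fin k)), n (Fin.last r) ≤ c l (Sum.inl (Fin.last r)) := by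
        intro l _
        exact hpure l (hBne l)
      refine hfin Finset.univ (by rw [Finset.card_univ, Fintype.card_fin]; omega) hge


end AuxiliaryForStatement9

theorem statement9 {G : Type*} [AddCommGroup G] [Fintype G] (r : ℕ)
    (n : Fin (r + 1) → ℕ) (h1 : ∀ i, 1 < n i)
    (hdvd : ∀ i j : Fin (r + 1), i ≤ j → n i ∣ n j)
    (hiso : Nonempty (G ≃+ ∀ i, ZMod (n i)))
    (s : ℕ) (hs : 2 ≤ s) (t : Fin (r + 1))
    (hst : s * (s - 1) / 2 ≤ r - (t : ℕ) + 1)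
    (k : ℕ) (hk : 2 ≤ k) :
    (1 + ∑ i, (n i - 1)) + s * (n t / 2) + (if Even (n t) then 0 else 1) +
        (k - 2) * n (Fin.last r) ≤ Dk G k := by
  classical
  obtain ⟨eq⟩ := hiso
  obtain ⟨S₀, hcard, hnoK⟩ := construction r n h1 hdvd s hs t hst k hk
  set S₁ : Multiset G := S₀.map ⇑eq.symm with hS₁
  have hcard1 : Multiset.card S₁ = Multiset.card S₀ := Multiset.card_map _ _
  have hnoK1 : ¬ HasKDisjointZeroSum k S₁ := by
    rintro ⟨T, hTc, hTzs, hTle⟩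
    apply hnoK
    refine ⟨T.map (Multiset.map ⇑eq), ?_, ?_, ?_⟩
    · rw [Multiset.card_map, hTc]
    · intro A hA
      rw [Multiset.mem_map] at hA
      obtain ⟨B, hB, rfl⟩ := hA
      obtain ⟨hB0, hBsum⟩ := hTzs B hB
      constructor
      · simpa [Multiset.map_eq_zero] using hB0
      · rw [← map_multiset_sum eq B, hBsum]
        exact _root_.map_zero eq
    · rw [map_msum]
      have hmono := Multiset.map_le_map (f := ⇑eq) hTle
      have hid : Multiset.map ⇑eq S₁ = S₀ := by
        rw [hS₁, Multiset.map_map]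
        simp
      rwa [hid] at hmono
  have hcard2 : Multiset.card S₁ + 1 =
      (1 + ∑ i, (n i - 1)) + s * (n t / 2) + (if Even (n t) then 0 else 1) +
        (k - 2) * n (Fin.last r) := by rw [hcard1, hcard]
  show _ ≤ sInf _
  apply le_csInf
  · exact ⟨k * Fintype.card G, fun S hS => hasK_of_card k S hS⟩
  · intro ℓ hℓ
    simp only [Set.mem_setOf_eq] at hℓ
    by_contra hcon
    push_neg at hcon
    exact hnoK1 (hℓ S₁ (by omega))
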